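/- Let p be a prime and let (A,+,·) be a pre-Lie algebra over F_p generated as a pre-Lie algebra by one element x, with cardinality p^4 and A^4 = 0. Write x^2 = x·x. Then the elements x, x^2, x^2·x, x·x^2 form a basis of A as a vector space over F_p, and all products of more than 3 elements of A are zero. -/

import Mathlib

/-- A pre-Lie algebra structure over `ZMod p` on the `ZMod p`-module `A`:
a bilinear multiplication satisfying the pre-Lie identity. -/
structure PreLie (p : ℕ) (A : Type) [AddCommGroup A] [Module (ZMod p) A] where
  mul : A → A → A
  add_mul : ∀ a b c, mul (a + b) c = mul a c + mul b c
  mul_add : ∀ a b c, mul a (b + c) = mul a b + mul a c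
  smul_mul : ∀ (r : ZMod p) (a b : A), mul (r • a) b = r • mul a b
  mul_smul : ∀ (r : ZMod p) (a b : A), mul a (r • b) = r • mul a b
  prelie : ∀ a b c, mul (mul a b) c - mul a (mul b c) = mul (mul b a) c - mul b (mul a c)

/-- `IsProd m n x` : `x` is a product (in some order, with some bracketing) of
`n` elements of `A` under the multiplication `m`. -/
inductive IsProd {A : Type} (m : A → A → A) : ℕ → A → Prop
  | of (a : A) : IsProd m 1 a
  | mul {j k : ℕ} {x y : A} : IsProd m j x → IsProd m k y → IsProd m (j + k) (m x y)

/-- `IsXProd m x n w` : `w` is a product (with some bracketing) of `n` copies of `x`. -/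
inductive IsXProd {A : Type} (m : A → A → A) (x : A) : ℕ → A → Prop
  | of : IsXProd m x 1 x
  | mul {j k : ℕ} {w v : A} : IsXProd m x j w → IsXProd m x k v → IsXProd m x (j + k) (m w v)

variable {A : Type} [AddCommGroup A]

/-- The span chain `Aⁿ` of a pre-Lie multiplication (`pchain p m n = Aⁿ` for `n ≥ 1`):
`A¹ = A`, `A^{i+1} = Σ_{j=1}^{i} A^j · A^{i+1-j}` (linear span). -/
def pchain (p : ℕ) [Module (ZMod p) A] (m : A → A → A) : ℕ → Submodule (ZMod p) A
  | 0 => ⊤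
  | 1 => ⊤
  | n + 2 => Submodule.span (ZMod p)
      {x | ∃ j : Fin (n + 1), ∃ u ∈ pchain p m (j.1 + 1), ∃ v ∈ pchain p m (n + 1 - j.1),
        x = m u v}

/-- `e^{L_a}(b) = Σ_{n=0}^{k-1} (1/n!) L_a^n(b)`, where `L_a(y) = a · y`. -/
def expL (p : ℕ) [Module (ZMod p) A] (m : A → A → A) (k : ℕ) (a b : A) : A :=
  ∑ n ∈ Finset.range k, ((Nat.factorial n : ZMod p))⁻¹ • ((fun y => m a y)^[n] b)

/-- `W(a) = a + Σ_{n=2}^{k} (1/n!) L_a^{n-1}(a)`. -/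
def Wmap (p : ℕ) [Module (ZMod p) A] (m : A → A → A) (k : ℕ) (a : A) : A :=
  a + ∑ n ∈ Finset.range (k - 1),
      ((Nat.factorial (n + 2) : ZMod p))⁻¹ • ((fun y => m a y)^[n + 1] a)

/-- The group-of-flows multiplication `a ∘ b = a + e^{L_{Ω(a)}}(b)`, where `Ω`
is the inverse of the bijection `W`. -/
noncomputable def flowCirc (p : ℕ) [Module (ZMod p) A] (m : A → A → A) (k : ℕ) (a b : A) : A :=
  a + expL p m k (@Function.invFun A A ⟨0⟩ (Wmap p m k) a) b

/-- Membership in the smallest sub-pre-Lie-algebra containing `x`. -/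
inductive PreLieGen (p : ℕ) [Module (ZMod p) A] (m : A → A → A) (x : A) : A → Prop
  | base : PreLieGen p m x x
  | zero : PreLieGen p m x 0
  | add {a b : A} : PreLieGen p m x a → PreLieGen p m x b → PreLieGen p m x (a + b)
  | neg {a : A} : PreLieGen p m x a → PreLieGen p m x (-a)
  | smul (r : ZMod p) {a : A} : PreLieGen p m x a → PreLieGen p m x (r • a)
  | mul {a b : A} : PreLieGen p m x a → PreLieGen p m x b → PreLieGen p m x (m a b)

lemma isProd_pos {m : A → A → A} {n : ℕ} {w : A} (h : IsProd m n w) : 1 ≤ n := by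
  induction h with
  | of a => exact le_refl 1
  | mul h1 h2 ih1 ih2 => omega

lemma pchain_succ_le (p : ℕ) [Module (ZMod p) A] (m : A → A → A) :
    ∀ n : ℕ, pchain p m (n + 1) ≤ pchain p m n := by
  intro n
  induction n using Nat.strong_induction_on with
  | _ n ih =>
    match n with
    | 0 => simp [pchain]
    | 1 => simp [pchain]
    | n + 2 =>
      show pchain p m ((n + 1) + 2) ≤ pchain p m (n + 2)
      rw [pchain]
      apply Submodule.span_le.mpr
      rintro _ ⟨j, u, hu, v, hv, rfl⟩
      show m u v ∈ pchain p m (n + 2)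
      rw [pchain]
      by_cases hj : j.1 ≤ n
      · have hv' : v ∈ pchain p m (n + 1 - j.1) := by
          have he : n + 1 + 1 - j.1 = (n + 1 - j.1) + 1 := by omega
          rw [he] at hv
          exact ih (n + 1 - j.1) (by omega) hv
        exact Submodule.subset_span ⟨⟨j.1, by omega⟩, u, hu, v, hv', rfl⟩
      · have hj1 : j.1 = n + 1 := by have := j.2; omega
        have hu' : u ∈ pchain p m (n + 1) := by
          rw [hj1] at hu
          exact ih (n + 1) (by omega) hu
        refine Submodule.subset_span ⟨⟨n, by omega⟩, u, hu', v, ?_, rfl⟩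
        have he : n + 1 - n = 1 := by omega
        rw [he, pchain]
        exact Submodule.mem_top

lemma pchain_antitone (p : ℕ) [Module (ZMod p) A] (m : A → A → A) {i j : ℕ} (h : i ≤ j) :
    pchain p m j ≤ pchain p m i := by
  induction j with
  | zero =>
    have : i = 0 := by omega
    subst this; exact le_refl _
  | succ j ih =>
    rcases Nat.lt_or_ge i (j + 1) with h' | h'
    · exact (pchain_succ_le p m j).trans (ih (by omega))
    · have : i = j + 1 := by omega
      subst this; exact le_refl _

lemma mul_mem_pchain (p : ℕ) [Module (ZMod p) A] {m : A → A → A} {j k : ℕ}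
    (hj : 1 ≤ j) (hk : 1 ≤ k) {u v : A}
    (hu : u ∈ pchain p m j) (hv : v ∈ pchain p m k) :
    m u v ∈ pchain p m (j + k) := by
  obtain ⟨j', rfl⟩ : ∃ j', j = j' + 1 := ⟨j - 1, by omega⟩
  obtain ⟨k', rfl⟩ : ∃ k', k = k' + 1 := ⟨k - 1, by omega⟩
  have he : j' + 1 + (k' + 1) = (j' + k') + 2 := by omega
  rw [he, pchain]
  refine Submodule.subset_span ⟨⟨j', by omega⟩, u, hu, v, ?_, rfl⟩
  have he2 : j' + k' + 1 - j' = k' + 1 := by omega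
  rw [he2]; exact hv

lemma isProd_mem_pchain (p : ℕ) [Module (ZMod p) A] {m : A → A → A} {n : ℕ} {w : A}
    (h : IsProd m n w) : w ∈ pchain p m n := by
  induction h with
  | of a => rw [pchain]; exact Submodule.mem_top
  | mul h1 h2 ih1 ih2 =>
    exact mul_mem_pchain p (isProd_pos h1) (isProd_pos h2) ih1 ih2

lemma prod_eq_zero_of_pchain_four (p : ℕ) [Module (ZMod p) A] {m : A → A → A}
    (h4 : pchain p m 4 = ⊥) {n : ℕ} (hn : 3 < n) {w : A} (h : IsProd m n w) : w = 0 := by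
  have h1 : w ∈ pchain p m n := isProd_mem_pchain p h
  have h2 : w ∈ pchain p m 4 := pchain_antitone p m (by omega) h1
  rw [h4] at h2
  simpa using h2

/-- a one-generated pre-Lie algebra over `F_p` of cardinality
`p^4` with `A^4 = 0` has basis `x, x², x²·x, x·x²`, and all products of more
than `3` elements are zero. -/
theorem oneGenerated_preLie_card_pow_four_A4_zero {p : ℕ} (hp : p.Prime)
    [Module (ZMod p) A] (L : PreLie p A) (x : A)
    (hgen : ∀ a : A, PreLieGen p L.mul x a)
    (hcard : Nat.card A = p ^ 4)
    (h4 : pchain p L.mul 4 = ⊥) :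
    (LinearIndependent (ZMod p)
        ![x, L.mul x x, L.mul (L.mul x x) x, L.mul x (L.mul x x)] ∧
      Submodule.span (ZMod p)
        {x, L.mul x x, L.mul (L.mul x x) x, L.mul x (L.mul x x)} = ⊤) ∧
    ∀ m : ℕ, 3 < m → ∀ w : A, IsProd L.mul m w → w = 0 := by
  haveI : Fact p.Prime := ⟨hp⟩
  set e2 := L.mul x x with he2
  set e3 := L.mul (L.mul x x) x with he3
  set e4 := L.mul x (L.mul x x) with he4
  -- the bilinear multiplication map
  set B : A →ₗ[ZMod p] A →ₗ[ZMod p] A :=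
    LinearMap.mk₂ (ZMod p) L.mul L.add_mul L.smul_mul L.mul_add L.mul_smul with hB
  have hzero : ∀ {j k : ℕ} {u v : A}, IsProd L.mul j u → IsProd L.mul k v → 4 ≤ j + k →
      L.mul u v = 0 := by
    intro j k u v hu hv hjk
    exact prod_eq_zero_of_pchain_four p h4 (by omega) (hu.mul hv)
  have p2 : IsProd L.mul 2 e2 := (IsProd.of x).mul (IsProd.of x)
  have p3 : IsProd L.mul 3 e3 := p2.mul (IsProd.of x)
  have p4 : IsProd L.mul 3 e4 := (IsProd.of x).mul p2
  set g : Set A := {x, e2, e3, e4} with hg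
  set S : Submodule (ZMod p) A := Submodule.span (ZMod p) g with hS
  -- products of generators stay in S
  have hmulS : ∀ a ∈ S, ∀ b ∈ S, L.mul a b ∈ S := by
    intro a ha b hb
    have hmem : L.mul a b ∈ Submodule.map₂ B S S := Submodule.apply_mem_map₂ B ha hb
    have hle : Submodule.map₂ B S S ≤ S := by
      rw [hS, Submodule.map₂_span_span]
      apply Submodule.span_le.mpr
      rintro _ ⟨u, hu, v, hv, rfl⟩
      have hBe : ∀ u v : A, B u v = L.mul u v := fun _ _ => rfl
      simp only [hg, Set.mem_insert_iff, Set.mem_singleton_iff] at hu hv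
      have hx1 : IsProd L.mul 1 u := IsProd.of u
      rcases hu with rfl | rfl | rfl | rfl <;> rcases hv with rfl | rfl | rfl | rfl <;>
        simp only [hB, LinearMap.mk₂_apply]
      · exact Submodule.subset_span (by simp [hg, he2, he3, he4])
      · exact Submodule.subset_span (by simp [hg, he2, he3, he4])
      · rw [hzero (IsProd.of _) p3 (by omega)]; exact zero_mem S
      · rw [hzero (IsProd.of _) p4 (by omega)]; exact zero_mem S
      · exact Submodule.subset_span (by simp [hg, he2, he3, he4])
      · rw [hzero p2 p2 (by omega)]; exact zero_mem S
      · rw [hzero p2 p3 (by omega)]; exact zero_mem S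
      · rw [hzero p2 p4 (by omega)]; exact zero_mem S
      · rw [hzero p3 (IsProd.of _) (by omega)]; exact zero_mem S
      · rw [hzero p3 p2 (by omega)]; exact zero_mem S
      · rw [hzero p3 p3 (by omega)]; exact zero_mem S
      · rw [hzero p3 p4 (by omega)]; exact zero_mem S
      · rw [hzero p4 (IsProd.of _) (by omega)]; exact zero_mem S
      · rw [hzero p4 p2 (by omega)]; exact zero_mem S
      · rw [hzero p4 p3 (by omega)]; exact zero_mem S
      · rw [hzero p4 p4 (by omega)]; exact zero_mem S
    exact hle hmem
  -- the span is everything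
  have hSall : ∀ a : A, a ∈ S := by
    intro a
    induction hgen a with
    | base => exact Submodule.subset_span (by simp [hg])
    | zero => exact zero_mem S
    | add ha hb iha ihb => exact add_mem iha ihb
    | neg ha iha => exact neg_mem iha
    | smul r ha iha => exact Submodule.smul_mem S r iha
    | mul ha hb iha ihb => exact hmulS _ iha _ ihb
  have hStop : S = ⊤ := Submodule.eq_top_iff'.mpr hSall
  -- finiteness and dimension
  haveI : Finite A := Nat.finite_of_card_ne_zero (by rw [hcard]; exact (pow_pos hp.pos 4).ne')
  haveI : Fintype A := Fintype.ofFinite A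
  have hfr : Module.finrank (ZMod p) A = 4 := by
    have hcard' : Fintype.card A = p ^ Module.finrank (ZMod p) A := by
      rw [Module.card_eq_pow_finrank (K := ZMod p) (V := A), ZMod.card]
    have : p ^ 4 = p ^ Module.finrank (ZMod p) A := by
      rw [← hcard', ← hcard, Nat.card_eq_fintype_card]
    exact (Nat.pow_right_injective hp.two_le this).symm
  have hrange : Set.range ![x, e2, e3, e4] = g := by
    rw [hg]
    ext y
    simp only [Matrix.range_cons, Matrix.range_empty, Set.mem_insert_iff,
      Set.mem_singleton_iff, Set.mem_union, Set.mem_empty_iff_false]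
    tauto
  refine ⟨⟨?_, hStop⟩, ?_⟩
  · apply linearIndependent_of_top_le_span_of_card_eq_finrank
    · rw [hrange, ← hS, hStop]
    · simp [hfr]
  · intro m hm w hw
    exact prod_eq_zero_of_pchain_four p h4 hm hw
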